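/- Let A ⊆ ℝ² be compact, equal to the closure of its bounded connected interior, vertically convex, and normal (meaning f⁺(a) = f⁻(a) and f⁺(b) = f⁻(b), where [a,b] is the projection of A onto the x-axis). Then A is staircase connected if and only if both f⁺ and −f⁻ are unimodal on [a,b]. -/

import Mathlib

open Set MeasureTheory Bornology
open scoped ENNReal

noncomputable section

/-- `ℝ^d` as Euclidean space. -/
abbrev EucR (d : ℕ) := EuclideanSpace ℝ (Fin d)

/-- The segment from `x` to `y` is parallel to a coordinate axis
(all coordinates except possibly one agree). -/
def IsOrthSeg {d : ℕ} (x y : EucR d) : Prop :=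
  ∃ i : Fin d, ∀ j, j ≠ i → x j = y j

/-- `p 0, p 1, …, p n` is an orthogonal polygonal path contained in `S`. -/
def IsOrthPathIn {d : ℕ} (S : Set (EucR d)) (p : ℕ → EucR d) (n : ℕ) : Prop :=
  ∀ k, k < n → IsOrthSeg (p k) (p (k + 1)) ∧ segment ℝ (p k) (p (k + 1)) ⊆ S

/-- `S` is orthogonally connected. -/
def OrthConnected {d : ℕ} (S : Set (EucR d)) : Prop :=
  ∀ x ∈ S, ∀ y ∈ S, ∃ n : ℕ, ∃ p : ℕ → EucR d,
    p 0 = x ∧ p n = y ∧ IsOrthPathIn S p n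

/-- An orthogonal path is a staircase if all edges parallel to the same axis
point in the same direction. -/
def IsStaircaseIn {d : ℕ} (S : Set (EucR d)) (p : ℕ → EucR d) (n : ℕ) : Prop :=
  IsOrthPathIn S p n ∧
    ∀ k, k < n → ∀ l, l < n → ∀ i : Fin d,
      (∀ j, j ≠ i → p k j = p (k + 1) j) → (∀ j, j ≠ i → p l j = p (l + 1) j) →
        0 ≤ (p (k + 1) i - p k i) * (p (l + 1) i - p l i)

/-- `S` is staircase connected. -/
def StaircaseConnected {d : ℕ} (S : Set (EucR d)) : Prop :=
  ∀ x ∈ S, ∀ y ∈ S, ∃ n : ℕ, ∃ p : ℕ → EucR d,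
    p 0 = x ∧ p n = y ∧ IsStaircaseIn S p n

/-- `S` is orthogonally convex. -/
def OrthConvex {d : ℕ} (S : Set (EucR d)) : Prop :=
  ∀ x ∈ S, ∀ y ∈ S, IsOrthSeg x y → segment ℝ x y ⊆ S

/-- A convex body: compact convex with nonempty interior. -/
def IsConvexBody {d : ℕ} (K : Set (EucR d)) : Prop :=
  Convex ℝ K ∧ IsCompact K ∧ (interior K).Nonempty

/-- The point of `ℝ²` with coordinates `(a, b)`. -/
def pt2 (a b : ℝ) : EucR 2 := (WithLp.equiv 2 (Fin 2 → ℝ)).symm ![a, b]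

/-- Horizontal width of `S` at `x`: the length of the connected component
containing `x` of the intersection of `S` with the horizontal line through `x`. -/
def hw (S : Set (EucR 2)) (x : EucR 2) : ℝ≥0∞ :=
  volume (connectedComponentIn {t : ℝ | pt2 t (x 1) ∈ S} (x 0))

/-- Vertical width of `S` at `x`. -/
def vw (S : Set (EucR 2)) (x : EucR 2) : ℝ≥0∞ :=
  volume (connectedComponentIn {t : ℝ | pt2 (x 0) t ∈ S} (x 1))

/-- The set of unit directions from `x` towards points of `K`. -/
def dirSet (x : EucR 2) (K : Set (EucR 2)) : Set (EucR 2) :=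
  {u | ∃ y ∈ K, y ≠ x ∧ u = ‖y - x‖⁻¹ • (y - x)}

/-- `α_x(K)`: the angular (1-dimensional Hausdorff) measure of the set of unit
directions from `x` towards other points of `K`. -/
def angMeasure (x : EucR 2) (K : Set (EucR 2)) : ℝ≥0∞ :=
  μH[1] (dirSet x K)

/-- The half-line from `x` through `y`. -/
def rayFrom (x y : EucR 2) : Set (EucR 2) := {z | ∃ t : ℝ, 0 ≤ t ∧ z = x + t • (y - x)}

/-- `T_x(K)`: the union of the half-lines from `x` through the points of `K \ {x}`. -/
def TCone (x : EucR 2) (K : Set (EucR 2)) : Set (EucR 2) := ⋃ y ∈ K \ {x}, rayFrom x y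

/-- `K` is obtuse: at every boundary point `x`, either `α_x(K) > π/2`, or
`α_x(K) = π/2` and `T_x(K) \ {x}` is not open. -/
def Obtuse (K : Set (EucR 2)) : Prop :=
  ∀ x ∈ frontier K,
    ENNReal.ofReal (Real.pi / 2) < angMeasure x K ∨
      (angMeasure x K = ENNReal.ofReal (Real.pi / 2) ∧ ¬ IsOpen (TCone x K \ {x}))

/-- Inclusion of `ℝ² × ℝ` into `ℝ³`. -/
def incl3 (q : EucR 2) (t : ℝ) : EucR 3 := (WithLp.equiv 2 (Fin 3 → ℝ)).symm ![q 0, q 1, t]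

/-- A piece of a continuum `C`: the closure of a connected component of
`C \ {x}` for some cut point `x` of `C`. -/
def IsPiece (C P : Set (EucR 2)) : Prop :=
  ∃ x ∈ C, ¬ IsPreconnected (C \ {x}) ∧
    ∃ y ∈ C \ {x}, P = closure (connectedComponentIn (C \ {x}) y)

/-- `f` is unimodal on `[a,b]`: non-decreasing on `[a,c]`, non-increasing on `[c,b]`
for some `c ∈ (a,b)`. -/
def Unimodal (f : ℝ → ℝ) (a b : ℝ) : Prop :=
  ∃ c ∈ Ioo a b, MonotoneOn f (Icc a c) ∧ AntitoneOn f (Icc c b)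

/-- `a` is an s-extreme point of `M`: it belongs to a staircase in `M` only as an
endpoint. -/
def SExtreme (M : Set (EucR 2)) (a : EucR 2) : Prop :=
  a ∈ M ∧ ∀ n : ℕ, ∀ γ : ℕ → EucR 2, IsStaircaseIn M γ n →
    a ∈ ⋃ k ∈ Set.Iio n, segment ℝ (γ k) (γ (k + 1)) → a = γ 0 ∨ a = γ n

/-- `M ⊆ ℝ²` is a strip: the preimage of an interval of `ℝ` under a nonzero
linear functional (this includes half-planes and the whole plane). -/
def IsStrip (M : Set (EucR 2)) : Prop :=
  ∃ f : EucR 2 →ₗ[ℝ] ℝ, f ≠ 0 ∧ ∃ I : Set ℝ, I.OrdConnected ∧ M = f ⁻¹' I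

end
noncomputable section StairHelpers

lemma pt2_app0 (a b : ℝ) : pt2 a b 0 = a := rfl
lemma pt2_app1 (a b : ℝ) : pt2 a b 1 = b := rfl
lemma pt2_eta (z : EucR 2) : z = pt2 (z 0) (z 1) := by
  ext i; fin_cases i <;> rfl

lemma pt2_combo (s t x1 y1 x2 y2 : ℝ) :
    s • pt2 x1 y1 + t • pt2 x2 y2 = pt2 (s*x1 + t*x2) (s*y1 + t*y2) := by
  ext i; fin_cases i <;> simp [pt2]

lemma cont_app (i : Fin 2) : Continuous fun z : EucR 2 => z i :=
  (continuous_apply i).comp (PiLp.continuous_ofLp 2 (fun _ : Fin 2 => ℝ))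

lemma dist_pt2 (x y x' y' : ℝ) :
    dist (pt2 x y) (pt2 x' y') = Real.sqrt ((x-x')^2 + (y-y')^2) := by
  rw [EuclideanSpace.dist_eq]
  rw [Fin.sum_univ_two]
  simp [pt2, Real.dist_eq, sq_abs]

-- membership in horizontal segment
lemma mem_segment_horiz {x1 x2 y t : ℝ} (h1 : x1 ≤ t) (h2 : t ≤ x2) :
    pt2 t y ∈ segment ℝ (pt2 x1 y) (pt2 x2 y) := by
  rcases (Convex.mem_Icc (le_trans h1 h2)).1 ⟨h1, h2⟩ with ⟨s1, s2, hs1, hs2, hsum, ht⟩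
  exact ⟨s1, s2, hs1, hs2, hsum, by rw [pt2_combo]; rw [show s1*y + s2*y = y by rw [← add_mul, hsum, one_mul]]; rw [ht]⟩

lemma mem_segment_vert {y1 y2 x t : ℝ} (h1 : y1 ≤ t) (h2 : t ≤ y2) :
    pt2 x t ∈ segment ℝ (pt2 x y1) (pt2 x y2) := by
  rcases (Convex.mem_Icc (le_trans h1 h2)).1 ⟨h1, h2⟩ with ⟨s1, s2, hs1, hs2, hsum, ht⟩
  exact ⟨s1, s2, hs1, hs2, hsum, by rw [pt2_combo]; rw [show s1*x + s2*x = x by rw [← add_mul, hsum, one_mul]]; rw [ht]⟩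

lemma segment_horiz_subset {x1 x2 y : ℝ} {S : Set (EucR 2)} (hle : x1 ≤ x2)
    (h : ∀ t ∈ Icc x1 x2, pt2 t y ∈ S) :
    segment ℝ (pt2 x1 y) (pt2 x2 y) ⊆ S := by
  rintro w ⟨s1, s2, hs1, hs2, hsum, rfl⟩
  rw [pt2_combo, show s1*y + s2*y = y by rw [← add_mul, hsum, one_mul]]
  exact h _ ((Convex.mem_Icc hle).2 ⟨s1, s2, hs1, hs2, hsum, rfl⟩)

lemma segment_vert_subset {y1 y2 x : ℝ} {S : Set (EucR 2)} (hle : y1 ≤ y2)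
    (h : ∀ t ∈ Icc y1 y2, pt2 x t ∈ S) :
    segment ℝ (pt2 x y1) (pt2 x y2) ⊆ S := by
  rintro w ⟨s1, s2, hs1, hs2, hsum, rfl⟩
  rw [pt2_combo, show s1*x + s2*x = x by rw [← add_mul, hsum, one_mul]]
  exact h _ ((Convex.mem_Icc hle).2 ⟨s1, s2, hs1, hs2, hsum, rfl⟩)

-- coordinates of segment points
lemma segment_coord {u v w : EucR 2} (h : w ∈ segment ℝ u v) (i : Fin 2) :
    w i ∈ segment ℝ (u i) (v i) := by
  rcases h with ⟨s1, s2, hs1, hs2, hsum, rfl⟩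
  exact ⟨s1, s2, hs1, hs2, hsum, rfl⟩

/-- north-east connectivity -/
def NEIn (S : Set (EucR 2)) (x y : EucR 2) : Prop :=
  ∃ n p, p 0 = x ∧ p n = y ∧ IsOrthPathIn S p n ∧
    ∀ k, k < n → p k 0 ≤ p (k+1) 0 ∧ p k 1 ≤ p (k+1) 1

lemma NEIn.refl (S : Set (EucR 2)) (x : EucR 2) : NEIn S x x :=
  ⟨0, fun _ => x, rfl, rfl, fun k hk => absurd hk (Nat.not_lt_zero k),
    fun k hk => absurd hk (Nat.not_lt_zero k)⟩

lemma NEIn.trans {S : Set (EucR 2)} {x y z : EucR 2}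
    (h1 : NEIn S x y) (h2 : NEIn S y z) : NEIn S x z := by
  obtain ⟨n, p, hp0, hpn, hpath, hmono⟩ := h1
  obtain ⟨m, q, hq0, hqm, hqath, hqmono⟩ := h2
  refine ⟨n + m, fun k => if k < n then p k else q (k - n), ?_, ?_, ?_, ?_⟩
  · by_cases h : 0 < n
    · simp [h, hp0]
    · obtain rfl : n = 0 := by omega
      simp only [Nat.sub_zero, if_neg (lt_irrefl 0)]
      rw [hq0, ← hpn]; exact hp0
  · have : ¬ (n + m < n) := by omega
    simp [this, hqm]
  · intro k hk
    rcases lt_trichotomy (k+1) n with h | h | h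
    · have hk' : k < n := by omega
      simpa [hk', h] using hpath k hk'
    · have hk' : k < n := by omega
      have : q ((k+1) - n) = p (k+1) := by rw [show k+1-n = 0 by omega, hq0, ← hpn, h]
      simp only [hk', if_pos, show ¬ (k+1 < n) by omega, if_neg, not_false_iff, this]
      simpa using hpath k hk'
    · have hk' : ¬ (k < n) := by omega
      have h2' : ¬ (k+1 < n) := by omega
      simp only [hk', h2', if_neg, not_false_iff]
      rw [show k+1-n = (k-n)+1 by omega]
      exact hqath (k-n) (by omega)
  · intro k hk
    rcases lt_trichotomy (k+1) n with h | h | h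
    · have hk' : k < n := by omega
      simpa [hk', h] using hmono k hk'
    · have hk' : k < n := by omega
      have : q ((k+1) - n) = p (k+1) := by rw [show k+1-n = 0 by omega, hq0, ← hpn, h]
      simp only [hk', if_pos, show ¬ (k+1 < n) by omega, if_neg, not_false_iff, this]
      simpa using hmono k hk'
    · have hk' : ¬ (k < n) := by omega
      have h2' : ¬ (k+1 < n) := by omega
      simp only [hk', h2', if_neg, not_false_iff]
      rw [show k+1-n = (k-n)+1 by omega]
      exact hqmono (k-n) (by omega)

lemma fin2_cases (j : Fin 2) : j = 0 ∨ j = 1 := by omega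

lemma NEIn.horiz {S : Set (EucR 2)} {x1 x2 y : ℝ} (hle : x1 ≤ x2)
    (hseg : segment ℝ (pt2 x1 y) (pt2 x2 y) ⊆ S) : NEIn S (pt2 x1 y) (pt2 x2 y) := by
  refine ⟨1, fun k => if k = 0 then pt2 x1 y else pt2 x2 y, by simp, by simp, ?_, ?_⟩
  · intro k hk
    rw [show k = 0 by omega]
    refine ⟨⟨0, fun j hj => ?_⟩, by simpa using hseg⟩
    rcases fin2_cases j with rfl | rfl
    · exact absurd rfl hj
    · simp [pt2_app1]
  · intro k hk
    rw [show k = 0 by omega]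
    simp [pt2_app0, pt2_app1, hle]

lemma NEIn.vert {S : Set (EucR 2)} {y1 y2 x : ℝ} (hle : y1 ≤ y2)
    (hseg : segment ℝ (pt2 x y1) (pt2 x y2) ⊆ S) : NEIn S (pt2 x y1) (pt2 x y2) := by
  refine ⟨1, fun k => if k = 0 then pt2 x y1 else pt2 x y2, by simp, by simp, ?_, ?_⟩
  · intro k hk
    rw [show k = 0 by omega]
    refine ⟨⟨1, fun j hj => ?_⟩, by simpa using hseg⟩
    rcases fin2_cases j with rfl | rfl
    · simp [pt2_app0]
    · exact absurd rfl hj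
  · intro k hk
    rw [show k = 0 by omega]
    simp [pt2_app0, pt2_app1, hle]

lemma NEIn.staircase {S : Set (EucR 2)} {x y : EucR 2} (h : NEIn S x y) :
    ∃ n p, p 0 = x ∧ p n = y ∧ IsStaircaseIn S p n := by
  obtain ⟨n, p, h0, hn, hpath, hmono⟩ := h
  refine ⟨n, p, h0, hn, hpath, fun k hk l hl i _ _ => ?_⟩
  have h1 := hmono k hk
  have h2 := hmono l hl
  rcases fin2_cases i with rfl | rfl
  · exact mul_nonneg (by linarith [h1.1]) (by linarith [h2.1])
  · exact mul_nonneg (by linarith [h1.2]) (by linarith [h2.2])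

section
variable {S : Set (EucR 2)} {γ : ℕ → EucR 2} {n : ℕ}

lemma stair_pairwise (h : IsStaircaseIn S γ n) (i : Fin 2) :
    ∀ k, k < n → ∀ l, l < n → 0 ≤ (γ (k+1) i - γ k i) * (γ (l+1) i - γ l i) := by
  have key : ∀ k, k < n → γ (k+1) i - γ k i = 0 ∨ (∀ j, j ≠ i → γ k j = γ (k+1) j) := by
    intro k hk
    obtain ⟨i₀, hi₀⟩ := (h.1 k hk).1
    by_cases hii : i₀ = i
    · right; exact hii ▸ hi₀
    · left; rw [hi₀ i (fun hc => hii hc.symm)]; ring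
  intro k hk l hl
  rcases key k hk with h1 | h1
  · rw [h1, zero_mul]
  rcases key l hl with h2 | h2
  · rw [h2, mul_zero]
  exact h.2 k hk l hl i h1 h2

lemma stair_dichotomy (h : IsStaircaseIn S γ n) (i : Fin 2) :
    (∀ k, k < n → γ k i ≤ γ (k+1) i) ∨ (∀ k, k < n → γ (k+1) i ≤ γ k i) := by
  by_contra hc
  push_neg at hc
  obtain ⟨⟨k, hk, hk2⟩, ⟨l, hl, hl2⟩⟩ := hc
  have := stair_pairwise h i l hl k hk
  nlinarith

lemma stair_vertex_mono {i : Fin 2} (hs : ∀ k, k < n → γ k i ≤ γ (k+1) i) :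
    ∀ k l, k ≤ l → l ≤ n → γ k i ≤ γ l i := by
  intro k l hkl hln
  induction l with
  | zero => rw [Nat.le_zero.1 hkl]
  | succ m ih =>
    rcases Nat.lt_or_ge k (m+1) with hlt | hge
    · exact le_trans (ih (by omega) (by omega)) (hs m (by omega))
    · rw [show k = m + 1 by omega]

lemma stair_rev_mono {i : Fin 2} (hs : ∀ k, k < n → γ (k+1) i ≤ γ k i) :
    ∀ k, k < n → (fun m => γ (n - m)) k i ≤ (fun m => γ (n - m)) (k+1) i := by
  intro k hkn
  have hj : n - (k+1) < n := by omega
  have := hs (n - (k+1)) hj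
  have he : n - (k+1) + 1 = n - k := by omega
  rw [he] at this
  exact this

lemma stair_vertex_bounds (h : IsStaircaseIn S γ n) (i : Fin 2) :
    ∀ k, k ≤ n → min (γ 0 i) (γ n i) ≤ γ k i ∧ γ k i ≤ max (γ 0 i) (γ n i) := by
  intro k hk
  rcases stair_dichotomy h i with hs | hs
  · have h1 := stair_vertex_mono hs 0 k (Nat.zero_le k) hk
    have h2 := stair_vertex_mono hs k n hk le_rfl
    exact ⟨le_trans (min_le_left _ _) h1, le_trans h2 (le_max_right _ _)⟩
  · have h1 := stair_vertex_mono (i := i) (stair_rev_mono hs) 0 (n - k) (Nat.zero_le _) (by omega)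
    have h2 := stair_vertex_mono (i := i) (stair_rev_mono hs) (n - k) n (by omega) le_rfl
    simp only [Nat.sub_zero, Nat.sub_self] at h1 h2
    rw [show n - (n - k) = k by omega] at h1 h2
    exact ⟨le_trans (min_le_right _ _) h1, le_trans h2 (le_max_left _ _)⟩

lemma coord_affine (u v : EucR 2) (t : ℝ) (i : Fin 2) :
    (u + t • (v - u)) i = u i + t * (v i - u i) := rfl

lemma stair_crossing (h : IsStaircaseIn S γ n) (h0 : γ 0 ∈ S) (hn : γ n ∈ S)
    (xb : ℝ) (hx1 : γ 0 0 ≤ xb) (hx2 : xb ≤ γ n 0) :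
    ∃ z ∈ S, z 0 = xb ∧ min (γ 0 1) (γ n 1) ≤ z 1 ∧ z 1 ≤ max (γ 0 1) (γ n 1) := by
  rcases stair_dichotomy h 0 with hs | hs
  swap
  · -- decreasing in x : all equal
    have h1 := stair_vertex_mono (i := (0 : Fin 2)) (stair_rev_mono hs) 0 n (Nat.zero_le _) le_rfl
    simp only [Nat.sub_zero, Nat.sub_self] at h1
    refine ⟨γ 0, h0, le_antisymm hx1 ?_, min_le_left _ _, le_max_left _ _⟩
    linarith
  · classical
    set K := (Finset.range (n+1)).filter (fun k => γ k 0 ≤ xb) with hK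
    have h0K : 0 ∈ K := by simp [hK, hx1]
    have hKne : K.Nonempty := ⟨0, h0K⟩
    set k0 := K.max' hKne with hk0
    have hk0K : k0 ∈ K := K.max'_mem hKne
    have hk0n : k0 ≤ n := by
      have := (Finset.mem_filter.1 hk0K).1; simp at this; omega
    have hk0le : γ k0 0 ≤ xb := (Finset.mem_filter.1 hk0K).2
    rcases Nat.lt_or_ge k0 n with hlt | hge
    · have hnot : ¬ (k0+1 ∈ K) := fun hc => by
        have := K.le_max' _ hc; omega
      have hgt : xb < γ (k0+1) 0 := by
        by_contra hc
        exact hnot (Finset.mem_filter.2 ⟨by simp; omega, le_of_not_gt hc⟩)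
      have hvu : 0 < γ (k0+1) 0 - γ k0 0 := by linarith
      set t := (xb - γ k0 0) / (γ (k0+1) 0 - γ k0 0) with ht
      have ht0 : 0 ≤ t := div_nonneg (by linarith) (le_of_lt hvu)
      have ht1 : t ≤ 1 := by
        rw [div_le_one hvu]; linarith
      set z := γ k0 + t • (γ (k0+1) - γ k0) with hz
      have hzseg : z ∈ segment ℝ (γ k0) (γ (k0+1)) := by
        rw [segment_eq_image']
        exact ⟨t, ⟨ht0, ht1⟩, rfl⟩
      have hzS : z ∈ S := (h.1 k0 hlt).2 hzseg
      have hz0 : z 0 = xb := by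
        rw [hz, coord_affine, ht]
        field_simp
        ring
      have hb1 := stair_vertex_bounds h 1 k0 hk0n
      have hb2 := stair_vertex_bounds h 1 (k0+1) (by omega)
      have hz1 : z 1 = γ k0 1 + t * (γ (k0+1) 1 - γ k0 1) := by rw [hz, coord_affine]
      refine ⟨z, hzS, hz0, ?_, ?_⟩ <;> rw [hz1] <;> nlinarith [hb1.1, hb1.2, hb2.1, hb2.2]
    · have hkn : k0 = n := le_antisymm hk0n hge
      exact ⟨γ n, hn, le_antisymm (hkn ▸ hk0le) hx2, min_le_right _ _, le_max_right _ _⟩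

lemma stair_reverse (h : IsStaircaseIn S γ n) :
    IsStaircaseIn S (fun k => γ (n - k)) n := by
  constructor
  · intro k hk
    have hj : n - (k+1) < n := by omega
    obtain ⟨⟨i, hi⟩, hseg⟩ := h.1 (n - (k+1)) hj
    have he : n - (k+1) + 1 = n - k := by omega
    refine ⟨⟨i, fun j hji => ?_⟩, fun w hw => ?_⟩
    · have := hi j hji
      rw [he] at this
      exact this.symm
    · have hw' : w ∈ segment ℝ (γ (n - k)) (γ (n - (k+1))) := hw
      rw [segment_symm, ← he] at hw'
      exact hseg hw'
  · intro k hk l hl i hki hli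
    have hjk : n - (k+1) < n := by omega
    have hjl : n - (l+1) < n := by omega
    have hek : n - (k+1) + 1 = n - k := by omega
    have hel : n - (l+1) + 1 = n - l := by omega
    have hki' : ∀ j, j ≠ i → γ (n - k) j = γ (n - (k+1)) j := hki
    have hli' : ∀ j, j ≠ i → γ (n - l) j = γ (n - (l+1)) j := hli
    have := h.2 (n - (k+1)) hjk (n - (l+1)) hjl i
      (by rw [hek]; exact fun j hj => (hki' j hj).symm)
      (by rw [hel]; exact fun j hj => (hli' j hj).symm)
    rw [hek, hel] at this
    show 0 ≤ (γ (n - (k+1)) i - γ (n - k) i) * (γ (n - (l+1)) i - γ (n - l) i)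
    nlinarith

end

-- reflection in the x-axis
def neg2 (z : EucR 2) : EucR 2 := pt2 (z 0) (-(z 1))

lemma neg2_app0 (z : EucR 2) : neg2 z 0 = z 0 := rfl
lemma neg2_app1 (z : EucR 2) : neg2 z 1 = -(z 1) := rfl

lemma neg2_neg2 (z : EucR 2) : neg2 (neg2 z) = z := by
  ext i; fin_cases i <;> simp [neg2, pt2]

lemma neg2_image_image (S : Set (EucR 2)) : neg2 '' (neg2 '' S) = S := by
  rw [Set.image_image]
  simp [neg2_neg2]

lemma neg2_combo (s t : ℝ) (u v : EucR 2) :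
    neg2 (s • u + t • v) = s • neg2 u + t • neg2 v := by
  ext i; fin_cases i <;> simp [neg2, pt2] <;> ring

lemma neg2_segment {u v w : EucR 2} (h : w ∈ segment ℝ u v) :
    neg2 w ∈ segment ℝ (neg2 u) (neg2 v) := by
  obtain ⟨s, t, hs, ht, hst, rfl⟩ := h
  exact ⟨s, t, hs, ht, hst, (neg2_combo s t u v).symm⟩

lemma neg2_isometry : Isometry neg2 := by
  apply Isometry.of_dist_eq
  intro u v
  rw [show neg2 u = pt2 (u 0) (-(u 1)) from rfl, show neg2 v = pt2 (v 0) (-(v 1)) from rfl,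
    dist_pt2]
  nth_rewrite 3 [pt2_eta u]
  nth_rewrite 3 [pt2_eta v]
  rw [dist_pt2]
  ring_nf

def neg2Homeo : EucR 2 ≃ₜ EucR 2 where
  toFun := neg2
  invFun := neg2
  left_inv := neg2_neg2
  right_inv := neg2_neg2
  continuous_toFun := neg2_isometry.continuous
  continuous_invFun := neg2_isometry.continuous

lemma stair_neg2 {S : Set (EucR 2)} {γ : ℕ → EucR 2} {n : ℕ} (h : IsStaircaseIn S γ n) :
    IsStaircaseIn (neg2 '' S) (fun k => neg2 (γ k)) n := by
  constructor
  · intro k hk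
    obtain ⟨⟨i, hi⟩, hseg⟩ := h.1 k hk
    refine ⟨⟨i, fun j hj => ?_⟩, fun w hw => ?_⟩
    · show neg2 (γ k) j = neg2 (γ (k+1)) j
      rcases fin2_cases j with rfl | rfl
      · rw [neg2_app0, neg2_app0, hi 0 hj]
      · rw [neg2_app1, neg2_app1, hi 1 hj]
    · have hw' : w ∈ segment ℝ (neg2 (γ k)) (neg2 (γ (k+1))) := hw
      have : neg2 w ∈ segment ℝ (γ k) (γ (k+1)) := by
        have := neg2_segment hw'
        rwa [neg2_neg2, neg2_neg2] at this
      exact ⟨neg2 w, hseg this, neg2_neg2 w⟩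
  · intro k hk l hl i hki hli
    have hki' : ∀ j, j ≠ i → neg2 (γ k) j = neg2 (γ (k+1)) j := hki
    have hli' : ∀ j, j ≠ i → neg2 (γ l) j = neg2 (γ (l+1)) j := hli
    show 0 ≤ (neg2 (γ (k+1)) i - neg2 (γ k) i) * (neg2 (γ (l+1)) i - neg2 (γ l) i)
    rcases fin2_cases i with rfl | rfl
    · have e1 : ∀ j, j ≠ (0 : Fin 2) → γ k j = γ (k+1) j := by
        intro j hj
        rcases fin2_cases j with rfl | rfl
        · exact absurd rfl hj
        · have := hki' 1 hj
          rw [neg2_app1, neg2_app1] at this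
          linarith
      have e2 : ∀ j, j ≠ (0 : Fin 2) → γ l j = γ (l+1) j := by
        intro j hj
        rcases fin2_cases j with rfl | rfl
        · exact absurd rfl hj
        · have := hli' 1 hj
          rw [neg2_app1, neg2_app1] at this
          linarith
      have := h.2 k hk l hl 0 e1 e2
      rw [neg2_app0, neg2_app0, neg2_app0, neg2_app0]
      exact this
    · have e1 : ∀ j, j ≠ (1 : Fin 2) → γ k j = γ (k+1) j := by
        intro j hj
        rcases fin2_cases j with rfl | rfl
        · exact hki' 0 hj
        · exact absurd rfl hj
      have e2 : ∀ j, j ≠ (1 : Fin 2) → γ l j = γ (l+1) j := by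
        intro j hj
        rcases fin2_cases j with rfl | rfl
        · exact hli' 0 hj
        · exact absurd rfl hj
      have := h.2 k hk l hl 1 e1 e2
      rw [neg2_app1, neg2_app1, neg2_app1, neg2_app1]
      nlinarith

lemma disconnect {B : Set (EucR 2)} (hBcl : B = closure (interior B))
    (hBconn : IsPreconnected (interior B)) (xb : ℝ)
    (hl : ∃ z ∈ B, z 0 < xb) (hr : ∃ z ∈ B, xb < z 0)
    (hline : ∀ z ∈ interior B, z 0 ≠ xb) : False := by
  set U : Set (EucR 2) := {z | z 0 < xb} with hU
  set V : Set (EucR 2) := {z | xb < z 0} with hV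
  have hUo : IsOpen U := isOpen_lt (cont_app 0) continuous_const
  have hVo : IsOpen V := isOpen_lt continuous_const (cont_app 0)
  have hcov : interior B ⊆ U ∪ V := by
    intro z hz
    rcases lt_or_gt_of_ne (hline z hz) with h | h
    · exact Or.inl h
    · exact Or.inr h
  have hUn : (interior B ∩ U).Nonempty := by
    obtain ⟨z, hzB, hzlt⟩ := hl
    rw [hBcl] at hzB
    obtain ⟨w, hwU, hwI⟩ := _root_.mem_closure_iff.1 hzB U hUo hzlt
    exact ⟨w, hwI, hwU⟩
  have hVn : (interior B ∩ V).Nonempty := by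
    obtain ⟨z, hzB, hzlt⟩ := hr
    rw [hBcl] at hzB
    obtain ⟨w, hwV, hwI⟩ := _root_.mem_closure_iff.1 hzB V hVo hzlt
    exact ⟨w, hwI, hwV⟩
  obtain ⟨w, _, hwU, hwV⟩ := hBconn U V hUo hVo hcov hUn hVn
  have h1 : w 0 < xb := hwU
  have h2 : xb < w 0 := hwV
  linarith

lemma interior_horiz {B : Set (EucR 2)} {z : EucR 2} (hz : z ∈ interior B) :
    ∃ ε > 0, ∀ δ : ℝ, |δ| < ε → pt2 (z 0 + δ) (z 1) ∈ B := by
  obtain ⟨ε, hε, hball⟩ := Metric.isOpen_iff.1 isOpen_interior z hz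
  refine ⟨ε, hε, fun δ hδ => ?_⟩
  have : pt2 (z 0 + δ) (z 1) ∈ Metric.ball z ε := by
    rw [Metric.mem_ball]
    calc dist (pt2 (z 0 + δ) (z 1)) z
        = dist (pt2 (z 0 + δ) (z 1)) (pt2 (z 0) (z 1)) := by rw [← pt2_eta]
      _ = Real.sqrt ((z 0 + δ - z 0)^2 + (z 1 - z 1)^2) := dist_pt2 _ _ _ _
      _ = |δ| := by rw [show (z 0 + δ - z 0)^2 + (z 1 - z 1)^2 = δ^2 by ring, Real.sqrt_sq_eq_abs]
      _ < ε := hδ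
  exact interior_subset (hball this)

lemma core {B : Set (EucR 2)} {a b c d : ℝ} {gp gm : ℝ → ℝ}
    (hc : c ∈ Set.Ioo a b) (hd : d ∈ Set.Ioo a b)
    (hpm : MonotoneOn gp (Set.Icc a c)) (hpa : AntitoneOn gp (Set.Icc c b))
    (hma : AntitoneOn gm (Set.Icc a d)) (hmm : MonotoneOn gm (Set.Icc d b))
    (hna : gp a = gm a)
    (hgood : ∀ x ∈ Set.Icc a b, gm x ≤ gp x)
    (hmem : ∀ z : EucR 2, z ∈ B ↔ z 0 ∈ Set.Icc a b ∧ gm (z 0) ≤ z 1 ∧ z 1 ≤ gp (z 0))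
    (hBcl : B = closure (interior B)) (hBconn : IsPreconnected (interior B))
    {p q : EucR 2} (hp : p ∈ B) (hq : q ∈ B) (h0 : p 0 ≤ q 0) (h1 : p 1 ≤ q 1) :
    NEIn B p q := by
  have memB : ∀ x y : ℝ, (pt2 x y ∈ B) ↔ (x ∈ Set.Icc a b ∧ gm x ≤ y ∧ y ≤ gp x) :=
    fun x y => hmem (pt2 x y)
  obtain ⟨⟨ha1, hb1⟩, hm1, hp1⟩ := (hmem p).1 hp
  obtain ⟨⟨ha2, hb2⟩, hm2, hp2⟩ := (hmem q).1 hq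
  have qc : ∀ u v w, a ≤ u → u ≤ v → v ≤ w → w ≤ b → min (gp u) (gp w) ≤ gp v := by
    intro u v w hu huv hvw hw
    rcases le_total v c with h | h
    · exact le_trans (min_le_left _ _)
        (hpm ⟨hu, le_trans huv h⟩ ⟨by linarith, h⟩ huv)
    · exact le_trans (min_le_right _ _)
        (hpa ⟨h, by linarith⟩ ⟨by linarith, hw⟩ hvw)
  have qm : ∀ u v w, a ≤ u → u ≤ v → v ≤ w → w ≤ b → gm v ≤ max (gm u) (gm w) := by
    intro u v w hu huv hvw hw
    rcases le_total v d with h | h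
    · exact le_trans (hma ⟨hu, le_trans huv h⟩ ⟨by linarith, h⟩ huv) (le_max_left _ _)
    · exact le_trans (hmm ⟨h, by linarith⟩ ⟨by linarith, hw⟩ hvw) (le_max_right _ _)
  by_contra hno
  -- the reachable set
  set T : Set ℝ := {x | x ∈ Set.Icc (p 0) (q 0) ∧ pt2 x (min (q 1) (gp x)) ∈ B ∧
    NEIn B p (pt2 x (min (q 1) (gp x)))} with hT
  -- no point of T sees level q 1
  have hlt : ∀ x ∈ T, gp x < q 1 := by
    intro x hx
    by_contra hge
    push_neg at hge
    obtain ⟨⟨hx1, hx2⟩, hxB, hxNE⟩ := hx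
    obtain ⟨⟨hxa, hxb⟩, hxm, _⟩ := (memB _ _).1 hxB
    have hmin : min (q 1) (gp x) = q 1 := min_eq_left hge
    rw [hmin] at hxB hxNE
    apply hno
    have hhor : NEIn B (pt2 x (q 1)) (pt2 (q 0) (q 1)) := by
      apply NEIn.horiz hx2
      apply segment_horiz_subset hx2
      intro t ⟨htl, htr⟩
      refine (memB _ _).2 ⟨⟨by linarith, by linarith⟩, ?_, ?_⟩
      · calc gm t ≤ max (gm x) (gm (q 0)) := qm x t (q 0) hxa htl htr hb2
          _ ≤ q 1 := max_le (by rw [hmin] at hxm; exact hxm) hm2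
      · calc q 1 ≤ min (gp x) (gp (q 0)) := le_min hge hp2
          _ ≤ gp t := qc x t (q 0) hxa htl htr hb2
    have := hxNE.trans hhor
    rwa [← pt2_eta q] at this
  -- p 0 belongs to T
  have hpT : p 0 ∈ T := by
    have hBm : pt2 (p 0) (min (q 1) (gp (p 0))) ∈ B :=
      (memB _ _).2 ⟨⟨ha1, hb1⟩, le_min (le_trans hm1 h1) (le_trans hm1 hp1),
        min_le_right _ _⟩
    refine ⟨⟨le_refl _, h0⟩, hBm, ?_⟩
    have : NEIn B (pt2 (p 0) (p 1)) (pt2 (p 0) (min (q 1) (gp (p 0)))) := by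
      apply NEIn.vert (le_min h1 hp1)
      apply segment_vert_subset (le_min h1 hp1)
      intro t ⟨htl, htr⟩
      exact (memB _ _).2 ⟨⟨ha1, hb1⟩, le_trans hm1 htl,
        le_trans htr (min_le_right _ _)⟩
    rwa [← pt2_eta p] at this
  have hTne : T.Nonempty := ⟨p 0, hpT⟩
  have hTbdd : BddAbove T := ⟨q 0, fun x hx => hx.1.2⟩
  -- every point of T is left of c
  have hTc : ∀ x ∈ T, x < c := by
    intro x hx
    by_contra hge
    push_neg at hge
    have hx2 : x ≤ q 0 := hx.1.2
    have : gp (q 0) ≤ gp x := hpa ⟨hge, by linarith [hx.1.1]⟩ ⟨le_trans hge hx2, hb2⟩ hx2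
    linarith [hlt x hx]
  set xs := sSup T with hxs
  have hxs1 : p 0 ≤ xs := le_csSup hTbdd hpT
  have hxsc : xs ≤ c := csSup_le hTne (fun x hx => le_of_lt (hTc x hx))
  have hxs2 : xs ≤ q 0 := csSup_le hTne (fun x hx => hx.1.2)
  have hxsb : xs < b := lt_of_le_of_lt hxsc hc.2
  have hxsa : a ≤ xs := le_trans ha1 hxs1
  -- the step lemma
  have step : ∀ t ∈ T, ∀ s, t ≤ s → s ≤ q 0 → gm s ≤ gp t → s ∈ T := by
    intro t ht s hts hs2 hgs
    obtain ⟨⟨ht1, ht2⟩, htB, htNE⟩ := ht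
    obtain ⟨⟨hta, htb⟩, htm, _⟩ := (memB _ _).1 htB
    have hgt : gp t < q 1 := hlt t ⟨⟨ht1, ht2⟩, htB, htNE⟩
    have hmin : min (q 1) (gp t) = gp t := min_eq_right (le_of_lt hgt)
    have hsa : a ≤ s := le_trans hta hts
    have hsb : s ≤ b := le_trans hs2 hb2
    have hgps : gp t ≤ gp s := by
      have := qc t s (q 0) hta hts hs2 hb2
      rw [min_eq_left (by linarith)] at this
      exact this
    have hhor : NEIn B (pt2 t (gp t)) (pt2 s (gp t)) := by
      apply NEIn.horiz hts
      apply segment_horiz_subset hts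
      intro u ⟨hul, hur⟩
      refine (memB _ _).2 ⟨⟨by linarith, by linarith⟩, ?_, ?_⟩
      · calc gm u ≤ max (gm t) (gm s) := qm t u s hta hul hur hsb
          _ ≤ gp t := max_le (by rw [hmin] at htm; exact htm) hgs
      · have := qc t u (q 0) hta hul (by linarith) hb2
        rw [min_eq_left (by linarith)] at this
        exact this
    have hvert : NEIn B (pt2 s (gp t)) (pt2 s (min (q 1) (gp s))) := by
      have hle : gp t ≤ min (q 1) (gp s) := le_min (le_of_lt hgt) hgps
      apply NEIn.vert hle
      apply segment_vert_subset hle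
      intro u ⟨hul, hur⟩
      exact (memB _ _).2 ⟨⟨hsa, hsb⟩, le_trans hgs hul,
        le_trans hur (min_le_right _ _)⟩
    have hsB : pt2 s (min (q 1) (gp s)) ∈ B :=
      (memB _ _).2 ⟨⟨hsa, hsb⟩, le_trans hgs (le_min (le_of_lt hgt) hgps),
        min_le_right _ _⟩
    refine ⟨⟨le_trans ht1 hts, hs2⟩, hsB, ?_⟩
    rw [hmin] at htNE
    exact (htNE.trans hhor).trans hvert
  by_cases hxT : xs ∈ T
  · -- the sup is reached
    have hxlt2 : xs < q 0 := by
      rcases lt_or_eq_of_le hxs2 with h | h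
      · exact h
      · exfalso; have := hlt xs hxT; rw [h] at this; linarith
    by_cases hex : ∃ s, xs < s ∧ s ≤ q 0 ∧ gm s ≤ gp xs
    · obtain ⟨s, hs1, hs2, hs3⟩ := hex
      have : s ∈ T := step xs hxT s (le_of_lt hs1) hs2 hs3
      have := le_csSup hTbdd this
      linarith
    · push_neg at hex
      have hxa : a < xs := by
        rcases lt_or_eq_of_le hxsa with h | h
        · exact h
        · exfalso
          have hs0lt : xs < min d (q 0) := by
            rw [← h]
            exact lt_min hd.1 (lt_of_le_of_lt (le_of_eq h) hxlt2)
          have hs0q : min d (q 0) ≤ q 0 := min_le_right _ _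
          have hgm0 : gm (min d (q 0)) ≤ gp xs := by
            have h1' : gm (min d (q 0)) ≤ gm a := by
              apply hma ⟨le_rfl, le_of_lt hd.1⟩ ⟨by linarith [hs0lt, h], min_le_left _ _⟩
              linarith [hs0lt]
            rw [← h, ← hna] at *
            linarith [h1']
          exact absurd hgm0 (not_le.2 (hex (min d (q 0)) hs0lt hs0q))
      apply disconnect hBcl hBconn xs
      · refine ⟨pt2 ((a+xs)/2) (gm ((a+xs)/2)), (memB _ _).2
          ⟨⟨by linarith, by linarith⟩, le_rfl, hgood _ ⟨by linarith, by linarith⟩⟩, ?_⟩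
        show (a+xs)/2 < xs
        linarith
      · exact ⟨q, hq, hxlt2⟩
      · intro z hz heqz
        obtain ⟨ε, hε, hball⟩ := interior_horiz hz
        set δ := min (ε/2) ((q 0 - xs)/2) with hδ
        have hδpos : 0 < δ := lt_min (by linarith) (by linarith)
        have hmem_s : pt2 (z 0 + δ) (z 1) ∈ B := by
          apply hball δ
          rw [abs_of_pos hδpos]
          exact lt_of_le_of_lt (min_le_left _ _) (by linarith)
        obtain ⟨_, hgms, _⟩ := (memB _ _).1 hmem_s
        obtain ⟨_, _, hzp⟩ := (hmem z).1 (interior_subset hz)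
        rw [heqz] at hgms hzp
        have := hex (xs + δ) (by linarith) (by linarith [min_le_right (ε/2) ((q 0 - xs)/2)])
        linarith
  · -- sup not attained
    have hx1lt : p 0 < xs := lt_of_le_of_ne hxs1 (fun hh => hxT (hh ▸ hpT))
    rcases eq_or_lt_of_le hxs2 with heq2 | hlt2
    · -- xs = q 0
      have hq0b : q 0 < b := heq2 ▸ hxsb
      have key2 : ∀ t ∈ T, gp t < gm (q 0) := by
        intro t ht
        by_contra hcon
        push_neg at hcon
        exact hxT (heq2 ▸ (step t ht (q 0) ht.1.2 le_rfl hcon))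
      apply disconnect hBcl hBconn xs
      · exact ⟨p, hp, hx1lt⟩
      · refine ⟨pt2 ((q 0 + b)/2) (gm ((q 0 + b)/2)), (memB _ _).2
          ⟨⟨by linarith [ha1, h0], by linarith⟩, le_rfl,
            hgood _ ⟨by linarith [ha1, h0], by linarith⟩⟩, ?_⟩
        show xs < (q 0 + b)/2
        rw [heq2]
        linarith
      · intro z hz heqz
        obtain ⟨ε, hε, hball⟩ := interior_horiz hz
        set u := xs - min (ε/2) ((xs - p 0)/2) with hu
        have hupos : 0 < min (ε/2) ((xs - p 0)/2) := lt_min (by linarith) (by linarith)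
        have hult : u < xs := by rw [hu]; linarith
        obtain ⟨t, ht, hut⟩ := exists_lt_of_lt_csSup hTne (show u < sSup T from hxs ▸ hult)
        have htxs : t < xs := lt_of_le_of_ne (le_csSup hTbdd ht) (fun hh => hxT (hh ▸ ht))
        have hmem_t : pt2 t (z 1) ∈ B := by
          have h1' := hball (t - z 0) (by
            rw [heqz, abs_of_nonpos (by linarith)]
            have : xs - t < min (ε/2) ((xs - p 0)/2) := by rw [hu] at hut; linarith
            linarith [min_le_left (ε/2) ((xs - p 0)/2)])
          rwa [show z 0 + (t - z 0) = t by ring] at h1'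
        obtain ⟨_, _, hzt⟩ := (memB _ _).1 hmem_t
        obtain ⟨_, hgmz, _⟩ := (hmem z).1 (interior_subset hz)
        rw [heqz, heq2] at hgmz
        linarith [key2 t ht]
    · -- xs < q 0
      have key3 : ∀ t ∈ T, ∀ s, xs < s → s ≤ q 0 → gp t < gm s := by
        intro t ht s hs1 hs2
        by_contra hcon
        push_neg at hcon
        have hsT : s ∈ T := step t ht s (le_trans (le_csSup hTbdd ht) (le_of_lt hs1)) hs2 hcon
        linarith [le_csSup hTbdd hsT]
      apply disconnect hBcl hBconn xs
      · exact ⟨p, hp, hx1lt⟩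
      · exact ⟨q, hq, hlt2⟩
      · intro z hz heqz
        obtain ⟨ε, hε, hball⟩ := interior_horiz hz
        set δ := min (ε/2) ((q 0 - xs)/2) with hδ
        have hδpos : 0 < δ := lt_min (by linarith) (by linarith)
        have hmem_s : pt2 (z 0 + δ) (z 1) ∈ B := by
          apply hball δ
          rw [abs_of_pos hδpos]
          exact lt_of_le_of_lt (min_le_left _ _) (by linarith)
        obtain ⟨_, hgms, _⟩ := (memB _ _).1 hmem_s
        set u := xs - min (ε/2) ((xs - p 0)/2) with hu
        have hupos : 0 < min (ε/2) ((xs - p 0)/2) := lt_min (by linarith) (by linarith)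
        have hult : u < xs := by rw [hu]; linarith
        obtain ⟨t, ht, hut⟩ := exists_lt_of_lt_csSup hTne (show u < sSup T from hxs ▸ hult)
        have htxs : t < xs := lt_of_le_of_ne (le_csSup hTbdd ht) (fun hh => hxT (hh ▸ ht))
        have hmem_t : pt2 t (z 1) ∈ B := by
          have h1' := hball (t - z 0) (by
            rw [heqz, abs_of_nonpos (by linarith)]
            have : xs - t < min (ε/2) ((xs - p 0)/2) := by rw [hu] at hut; linarith
            linarith [min_le_left (ε/2) ((xs - p 0)/2)])
          rwa [show z 0 + (t - z 0) = t by ring] at h1'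
        obtain ⟨_, _, hzt⟩ := (memB _ _).1 hmem_t
        have hk := key3 t ht (xs + δ) (by linarith)
          (by linarith [min_le_right (ε/2) ((q 0 - xs)/2)])
        rw [heqz] at hgms
        linarith

lemma corner_left {A : Set (EucR 2)} {a b : ℝ} {fp fm : ℝ → ℝ}
    (hA : ∀ z : EucR 2, z ∈ A ↔ z 0 ∈ Set.Icc a b ∧ fm (z 0) ≤ z 1 ∧ z 1 ≤ fp (z 0))
    (heqa : fp a = fm a) (heqb : fp b = fm b) (hab : a < b) (hsc : StaircaseConnected A) :
    ∃ x₁, a < x₁ ∧ x₁ ≤ b ∧ ∀ t ∈ Set.Icc a x₁, pt2 t (fp a) ∈ A := by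
  classical
  have hPa : pt2 a (fp a) ∈ A :=
    (hA _).2 ⟨⟨le_rfl, le_of_lt hab⟩, le_of_eq heqa.symm, le_rfl⟩
  have hPb : pt2 b (fp b) ∈ A :=
    (hA _).2 ⟨⟨le_of_lt hab, le_rfl⟩, le_of_eq heqb.symm, le_rfl⟩
  obtain ⟨n, γ, h0, hn, hstair⟩ := hsc _ hPa _ hPb
  have h00 : γ 0 0 = a := by rw [h0, pt2_app0]
  have hn0 : γ n 0 = b := by rw [hn, pt2_app0]
  have hs : ∀ k, k < n → γ k 0 ≤ γ (k+1) 0 := by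
    rcases stair_dichotomy hstair 0 with hs | hs
    · exact hs
    · exfalso
      have h1 := stair_vertex_mono (i := (0 : Fin 2)) (stair_rev_mono hs) 0 n (Nat.zero_le _) le_rfl
      simp only [Nat.sub_zero, Nat.sub_self] at h1
      rw [h00, hn0] at h1
      linarith
  set P : ℕ → Prop := fun k => k < n ∧ γ k 0 < γ (k+1) 0 with hPdef
  have hP : ∃ k, P k := by
    by_contra hc
    push_neg at hc
    have hall : ∀ m, m ≤ n → γ m 0 = a := by
      intro m hm
      induction m with
      | zero => exact h00
      | succ i ih =>
        have hi : i < n := by omega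
        have := hc i
        rw [hPdef] at this
        simp only [not_and, not_lt] at this
        exact le_antisymm (this hi) (hs i hi) ▸ ih (by omega)
    have := hall n le_rfl
    rw [hn0] at this
    linarith
  set k0 := Nat.find hP with hk0def
  obtain ⟨hk0n, hk0lt⟩ : P k0 := Nat.find_spec hP
  have hprior : ∀ m, m ≤ k0 → γ m 0 = a := by
    intro m hm
    induction m with
    | zero => exact h00
    | succ i ih =>
      have hik : i < k0 := by omega
      have hnP := Nat.find_min hP hik
      rw [hPdef] at hnP
      simp only [not_and, not_lt] at hnP
      have hi : i < n := by omega
      exact le_antisymm (hnP hi) (hs i hi) ▸ ih (by omega)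
  have hk0mem : γ k0 ∈ A := (hstair.1 k0 hk0n).2 (left_mem_segment ℝ _ _)
  have hk0x : γ k0 0 = a := hprior k0 le_rfl
  have hk0y : γ k0 1 = fp a := by
    obtain ⟨_, hml, hmr⟩ := (hA _).1 hk0mem
    rw [hk0x] at hml hmr
    linarith [heqa.le, heqa.ge]
  obtain ⟨i₀, hi₀⟩ := (hstair.1 k0 hk0n).1
  have hi0 : i₀ = 0 := by
    rcases fin2_cases i₀ with h | h
    · exact h
    · exfalso
      have := hi₀ 0 (by rw [h]; exact (by decide : (0 : Fin 2) ≠ 1))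
      rw [hk0x] at this
      linarith [hk0lt, this.symm.le, hk0lt.trans_le (le_of_eq this.symm)]
  have hk1y : γ (k0+1) 1 = fp a := by
    have := hi₀ 1 (by rw [hi0]; decide)
    rw [← this, hk0y]
  have hk1mem : γ (k0+1) ∈ A := (hstair.1 k0 hk0n).2 (right_mem_segment ℝ _ _)
  refine ⟨γ (k0+1) 0, by rw [← hk0x]; exact hk0lt, ((hA _).1 hk1mem).1.2, ?_⟩
  intro t ⟨htl, htr⟩
  have hseg := (hstair.1 k0 hk0n).2
  have hγk0 : γ k0 = pt2 a (fp a) := by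
    conv_lhs => rw [pt2_eta (γ k0)]
    rw [hk0x, hk0y]
  have hγk1 : γ (k0+1) = pt2 (γ (k0+1) 0) (fp a) := by
    conv_lhs => rw [pt2_eta (γ (k0+1))]
    rw [hk1y]
  apply hseg
  rw [hγk0, hγk1]
  exact mem_segment_horiz htl htr

lemma corner_right {A : Set (EucR 2)} {a b : ℝ} {fp fm : ℝ → ℝ}
    (hA : ∀ z : EucR 2, z ∈ A ↔ z 0 ∈ Set.Icc a b ∧ fm (z 0) ≤ z 1 ∧ z 1 ≤ fp (z 0))
    (heqa : fp a = fm a) (heqb : fp b = fm b) (hab : a < b) (hsc : StaircaseConnected A) :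
    ∃ x₁, a ≤ x₁ ∧ x₁ < b ∧ ∀ t ∈ Set.Icc x₁ b, pt2 t (fp b) ∈ A := by
  classical
  have hPa : pt2 a (fp a) ∈ A :=
    (hA _).2 ⟨⟨le_rfl, le_of_lt hab⟩, le_of_eq heqa.symm, le_rfl⟩
  have hPb : pt2 b (fp b) ∈ A :=
    (hA _).2 ⟨⟨le_of_lt hab, le_rfl⟩, le_of_eq heqb.symm, le_rfl⟩
  obtain ⟨n, γ, h0, hn, hstair⟩ := hsc _ hPb _ hPa
  have h00 : γ 0 0 = b := by rw [h0, pt2_app0]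
  have hn0 : γ n 0 = a := by rw [hn, pt2_app0]
  have hs : ∀ k, k < n → γ (k+1) 0 ≤ γ k 0 := by
    rcases stair_dichotomy hstair 0 with hs | hs
    · exfalso
      have h1 := stair_vertex_mono (i := (0 : Fin 2)) hs 0 n (Nat.zero_le _) le_rfl
      rw [h00, hn0] at h1
      linarith
    · exact hs
  set P : ℕ → Prop := fun k => k < n ∧ γ (k+1) 0 < γ k 0 with hPdef
  have hP : ∃ k, P k := by
    by_contra hc
    push_neg at hc
    have hall : ∀ m, m ≤ n → γ m 0 = b := by
      intro m hm
      induction m with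
      | zero => exact h00
      | succ i ih =>
        have hi : i < n := by omega
        have := hc i
        rw [hPdef] at this
        simp only [not_and, not_lt] at this
        exact le_antisymm (hs i hi) (this hi) ▸ ih (by omega)
    have := hall n le_rfl
    rw [hn0] at this
    linarith
  set k0 := Nat.find hP with hk0def
  obtain ⟨hk0n, hk0lt⟩ : P k0 := Nat.find_spec hP
  have hprior : ∀ m, m ≤ k0 → γ m 0 = b := by
    intro m hm
    induction m with
    | zero => exact h00
    | succ i ih =>
      have hik : i < k0 := by omega
      have hnP := Nat.find_min hP hik
      rw [hPdef] at hnP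
      simp only [not_and, not_lt] at hnP
      have hi : i < n := by omega
      exact le_antisymm (hs i hi) (hnP hi) ▸ ih (by omega)
  have hk0mem : γ k0 ∈ A := (hstair.1 k0 hk0n).2 (left_mem_segment ℝ _ _)
  have hk0x : γ k0 0 = b := hprior k0 le_rfl
  have hk0y : γ k0 1 = fp b := by
    obtain ⟨_, hml, hmr⟩ := (hA _).1 hk0mem
    rw [hk0x] at hml hmr
    linarith [heqb.le, heqb.ge]
  obtain ⟨i₀, hi₀⟩ := (hstair.1 k0 hk0n).1
  have hi0 : i₀ = 0 := by
    rcases fin2_cases i₀ with h | h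
    · exact h
    · exfalso
      have := hi₀ 0 (by rw [h]; exact (by decide : (0 : Fin 2) ≠ 1))
      rw [hk0x] at this
      linarith [hk0lt, this.symm.le]
  have hk1y : γ (k0+1) 1 = fp b := by
    have := hi₀ 1 (by rw [hi0]; decide)
    rw [← this, hk0y]
  have hk1mem : γ (k0+1) ∈ A := (hstair.1 k0 hk0n).2 (right_mem_segment ℝ _ _)
  refine ⟨γ (k0+1) 0, ((hA _).1 hk1mem).1.1, by rw [← hk0x]; exact hk0lt, ?_⟩
  intro t ⟨htl, htr⟩
  have hseg := (hstair.1 k0 hk0n).2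
  have hγk0 : γ k0 = pt2 b (fp b) := by
    conv_lhs => rw [pt2_eta (γ k0)]
    rw [hk0x, hk0y]
  have hγk1 : γ (k0+1) = pt2 (γ (k0+1) 0) (fp b) := by
    conv_lhs => rw [pt2_eta (γ (k0+1))]
    rw [hk1y]
  apply hseg
  rw [hγk0, hγk1, segment_symm]
  exact mem_segment_horiz htl htr

end StairHelpers

/-- A normal, vertically convex set `A ⊆ ℝ²` which is the closure of its bounded
connected interior is staircase connected iff `f⁺` and `-f⁻` are unimodal. -/
theorem staircaseConnected_iff_unimodal (A : Set (EucR 2))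
    (hcomp : IsCompact A) (hcl : A = closure (interior A))
    (hbd : IsBounded (interior A)) (hconn : IsConnected (interior A))
    (hvc : ∀ p ∈ A, ∀ q ∈ A, p 0 = q 0 → segment ℝ p q ⊆ A)
    (a b : ℝ) (fp fm : ℝ → ℝ)
    (hab : ∀ x : ℝ, (∃ y, pt2 x y ∈ A) ↔ x ∈ Icc a b)
    (hfp : ∀ x ∈ Icc a b, IsGreatest {y | pt2 x y ∈ A} (fp x))
    (hfm : ∀ x ∈ Icc a b, IsLeast {y | pt2 x y ∈ A} (fm x))
    (hnorm : fp a = fm a ∧ fp b = fm b) :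
    StaircaseConnected A ↔ (Unimodal fp a b ∧ Unimodal (fun x => -(fm x)) a b) := by
  have hgood : ∀ x ∈ Set.Icc a b, fm x ≤ fp x := fun x hx => (hfp x hx).2 (hfm x hx).1
  have hA : ∀ z : EucR 2, z ∈ A ↔ z 0 ∈ Set.Icc a b ∧ fm (z 0) ≤ z 1 ∧ z 1 ≤ fp (z 0) := by
    intro z
    constructor
    · intro hz
      have hz' : pt2 (z 0) (z 1) ∈ A := by rw [← pt2_eta]; exact hz
      have hx : z 0 ∈ Set.Icc a b := (hab (z 0)).1 ⟨z 1, hz'⟩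
      exact ⟨hx, (hfm _ hx).2 hz', (hfp _ hx).2 hz'⟩
    · rintro ⟨hx, h1, h2⟩
      have hseg := hvc _ (hfm _ hx).1 _ (hfp _ hx).1 rfl
      rw [pt2_eta z]
      exact hseg (mem_segment_vert h1 h2)
  have hintne : (interior A).Nonempty := hconn.nonempty
  have haltb : a < b := by
    obtain ⟨z, hz⟩ := hintne
    obtain ⟨ε, hε, hball⟩ := interior_horiz hz
    have h1 := hball (-(ε/2)) (by rw [abs_neg, abs_of_pos (by linarith)]; linarith)
    have h2 := hball (ε/2) (by rw [abs_of_pos (by linarith)]; linarith)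
    have h1' : z 0 + -(ε/2) ∈ Set.Icc a b := ((hA _).1 h1).1
    have h2' : z 0 + ε/2 ∈ Set.Icc a b := ((hA _).1 h2).1
    have := h1'.1
    have := h2'.2
    linarith
  constructor
  · -- staircase connected → unimodal
    intro hsc
    have qcfp : ∀ u v w, a ≤ u → u ≤ v → v ≤ w → w ≤ b → min (fp u) (fp w) ≤ fp v := by
      intro u v w hu huv hvw hwb
      have hu' : u ∈ Set.Icc a b := ⟨hu, by linarith⟩
      have hw' : w ∈ Set.Icc a b := ⟨by linarith, hwb⟩
      have hU : pt2 u (fp u) ∈ A := (hfp u hu').1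
      have hW : pt2 w (fp w) ∈ A := (hfp w hw').1
      obtain ⟨n, γ, h0, hn, hst⟩ := hsc _ hU _ hW
      obtain ⟨z, hzA, hz0, hz1, _⟩ := stair_crossing hst (h0 ▸ hU) (hn ▸ hW) v
        (by rw [h0]; exact huv) (by rw [hn]; exact hvw)
      have hzfp : z 1 ≤ fp (z 0) := ((hA z).1 hzA).2.2
      rw [hz0] at hzfp
      have hz1' : min (fp u) (fp w) ≤ z 1 := by rw [h0, hn] at hz1; exact hz1
      linarith
    have qmfm : ∀ u v w, a ≤ u → u ≤ v → v ≤ w → w ≤ b → fm v ≤ max (fm u) (fm w) := by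
      intro u v w hu huv hvw hwb
      have hu' : u ∈ Set.Icc a b := ⟨hu, by linarith⟩
      have hw' : w ∈ Set.Icc a b := ⟨by linarith, hwb⟩
      have hU : pt2 u (fm u) ∈ A := (hfm u hu').1
      have hW : pt2 w (fm w) ∈ A := (hfm w hw').1
      obtain ⟨n, γ, h0, hn, hst⟩ := hsc _ hU _ hW
      obtain ⟨z, hzA, hz0, _, hz2⟩ := stair_crossing hst (h0 ▸ hU) (hn ▸ hW) v
        (by rw [h0]; exact huv) (by rw [hn]; exact hvw)
      have hzfm : fm (z 0) ≤ z 1 := ((hA z).1 hzA).2.1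
      rw [hz0] at hzfm
      have hz2' : z 1 ≤ max (fm u) (fm w) := by rw [h0, hn] at hz2; exact hz2
      linarith
    have hAne : A.Nonempty := ⟨_, interior_subset hintne.some_mem⟩
    obtain ⟨zM, hzM, hzMmax⟩ := hcomp.exists_isMaxOn hAne ((cont_app 1).continuousOn)
    obtain ⟨zm, hzm, hzmmin⟩ := hcomp.exists_isMinOn hAne ((cont_app 1).continuousOn)
    have hzM0 : zM 0 ∈ Set.Icc a b := ((hA zM).1 hzM).1
    have hzm0 : zm 0 ∈ Set.Icc a b := ((hA zm).1 hzm).1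
    have hfpmax : ∀ x ∈ Set.Icc a b, fp x ≤ fp (zM 0) := by
      intro x hx
      have h1 : fp x ≤ zM 1 := isMaxOn_iff.1 hzMmax _ (hfp x hx).1
      have h2 : zM 1 ≤ fp (zM 0) := ((hA zM).1 hzM).2.2
      linarith
    have hfmmin : ∀ x ∈ Set.Icc a b, fm (zm 0) ≤ fm x := by
      intro x hx
      have h1 : zm 1 ≤ fm x := isMinOn_iff.1 hzmmin _ (hfm x hx).1
      have h2 : fm (zm 0) ≤ zm 1 := ((hA zm).1 hzm).2.1
      linarith
    have unimodal_of : ∀ f : ℝ → ℝ,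
        (∀ u v w, a ≤ u → u ≤ v → v ≤ w → w ≤ b → min (f u) (f w) ≤ f v) →
        ∀ c, a < c → c < b → (∀ x ∈ Set.Icc a b, f x ≤ f c) → Unimodal f a b := by
      intro f hqc c hca hcb hmax
      refine ⟨c, ⟨hca, hcb⟩, ?_, ?_⟩
      · intro u hu v hv huv
        have := hqc u v c hu.1 huv hv.2 (le_of_lt hcb)
        rw [min_eq_left (hmax u ⟨hu.1, le_trans hu.2 (le_of_lt hcb)⟩)] at this
        exact this
      · intro u hu v hv huv
        have := hqc c u v (le_of_lt hca) hu.1 huv hv.2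
        rw [min_eq_right (hmax v ⟨le_trans (le_of_lt hca) hv.1, hv.2⟩)] at this
        exact this
    constructor
    · -- fp unimodal
      rcases lt_or_eq_of_le hzM0.1 with hlo | hlo
      · rcases lt_or_eq_of_le hzM0.2 with hhi | hhi
        · exact unimodal_of fp qcfp (zM 0) hlo hhi hfpmax
        · -- max attained at b
          obtain ⟨x₁, hx1a, hx1b, hx1⟩ := corner_right hA hnorm.1 hnorm.2 haltb hsc
          set c := max x₁ ((a+b)/2) with hc
          have hca : a < c := lt_of_lt_of_le (by linarith) (le_max_right _ _)
          have hcb : c < b := max_lt hx1b (by linarith)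
          refine unimodal_of fp qcfp c hca hcb ?_
          intro x hx
          have h1 : pt2 c (fp b) ∈ A := hx1 c ⟨le_max_left _ _, le_of_lt hcb⟩
          have h2 : fp b ≤ fp c := ((hA _).1 h1).2.2
          have h3 : fp x ≤ fp (zM 0) := hfpmax x hx
          rw [hhi] at h3
          linarith
      · -- max attained at a
        obtain ⟨x₁, hx1a, hx1b, hx1⟩ := corner_left hA hnorm.1 hnorm.2 haltb hsc
        set c := min x₁ ((a+b)/2) with hc
        have hca : a < c := lt_min hx1a (by linarith)
        have hcb : c < b := lt_of_le_of_lt (min_le_right _ _) (by linarith)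
        refine unimodal_of fp qcfp c hca hcb ?_
        intro x hx
        have h1 : pt2 c (fp a) ∈ A := hx1 c ⟨le_of_lt hca, min_le_left _ _⟩
        have h2 : fp a ≤ fp c := ((hA _).1 h1).2.2
        have h3 : fp x ≤ fp (zM 0) := hfpmax x hx
        rw [← hlo] at h3
        linarith
    · -- -fm unimodal
      have qcg : ∀ u v w, a ≤ u → u ≤ v → v ≤ w → w ≤ b →
          min (-(fm u)) (-(fm w)) ≤ -(fm v) := by
        intro u v w hu huv hvw hwb
        have := qmfm u v w hu huv hvw hwb
        rw [min_neg_neg]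
        linarith
      have hgmax : ∀ x ∈ Set.Icc a b, -(fm x) ≤ -(fm (zm 0)) := by
        intro x hx
        have := hfmmin x hx
        linarith
      rcases lt_or_eq_of_le hzm0.1 with hlo | hlo
      · rcases lt_or_eq_of_le hzm0.2 with hhi | hhi
        · exact unimodal_of _ qcg (zm 0) hlo hhi hgmax
        · obtain ⟨x₁, hx1a, hx1b, hx1⟩ := corner_right hA hnorm.1 hnorm.2 haltb hsc
          set c := max x₁ ((a+b)/2) with hc
          have hca : a < c := lt_of_lt_of_le (by linarith) (le_max_right _ _)
          have hcb : c < b := max_lt hx1b (by linarith)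
          refine unimodal_of _ qcg c hca hcb ?_
          intro x hx
          have h1 : pt2 c (fp b) ∈ A := hx1 c ⟨le_max_left _ _, le_of_lt hcb⟩
          have h2 : fm c ≤ fp b := ((hA _).1 h1).2.1
          have h3 : fm (zm 0) ≤ fm x := hfmmin x hx
          rw [hhi] at h3
          have h4 : fp b = fm b := hnorm.2
          show -(fm x) ≤ -(fm c)
          linarith
      · obtain ⟨x₁, hx1a, hx1b, hx1⟩ := corner_left hA hnorm.1 hnorm.2 haltb hsc
        set c := min x₁ ((a+b)/2) with hc
        have hca : a < c := lt_min hx1a (by linarith)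
        have hcb : c < b := lt_of_le_of_lt (min_le_right _ _) (by linarith)
        refine unimodal_of _ qcg c hca hcb ?_
        intro x hx
        have h1 : pt2 c (fp a) ∈ A := hx1 c ⟨le_of_lt hca, min_le_left _ _⟩
        have h2 : fm c ≤ fp a := ((hA _).1 h1).2.1
        have h3 : fm (zm 0) ≤ fm x := hfmmin x hx
        rw [← hlo] at h3
        have h4 : fp a = fm a := hnorm.1
        show -(fm x) ≤ -(fm c)
        linarith
  · -- unimodal → staircase connected
    rintro ⟨⟨c, hc, hpm, hpa⟩, ⟨d, hd, hgm, hga⟩⟩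
    have hma : AntitoneOn fm (Set.Icc a d) := by
      intro u hu v hv huv
      have h2 : -(fm u) ≤ -(fm v) := hgm hu hv huv
      linarith
    have hmm : MonotoneOn fm (Set.Icc d b) := by
      intro u hu v hv huv
      have h2 : -(fm v) ≤ -(fm u) := hga hu hv huv
      linarith
    have hma' : AntitoneOn (fun t => -(fp t)) (Set.Icc a c) := by
      intro u hu v hv huv
      have h2 : fp u ≤ fp v := hpm hu hv huv
      show -(fp v) ≤ -(fp u)
      linarith
    have hmm' : MonotoneOn (fun t => -(fp t)) (Set.Icc c b) := by
      intro u hu v hv huv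
      have h2 : fp v ≤ fp u := hpa hu hv huv
      show -(fp u) ≤ -(fp v)
      linarith
    set Aρ := neg2 '' A with hAρ
    have hmemρ : ∀ z : EucR 2, z ∈ Aρ ↔
        z 0 ∈ Set.Icc a b ∧ -(fp (z 0)) ≤ z 1 ∧ z 1 ≤ -(fm (z 0)) := by
      intro z
      constructor
      · rintro ⟨w, hw, rfl⟩
        obtain ⟨h1, h2, h3⟩ := (hA w).1 hw
        refine ⟨h1, ?_, ?_⟩
        · rw [neg2_app1]; show -(fp (w 0)) ≤ -(w 1); linarith
        · rw [neg2_app1]; show -(w 1) ≤ -(fm (w 0)); linarith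
      · rintro ⟨h1, h2, h3⟩
        refine ⟨neg2 z, (hA _).2 ⟨h1, ?_, ?_⟩, neg2_neg2 z⟩
        · rw [neg2_app1]; show fm (z 0) ≤ -(z 1); linarith
        · rw [neg2_app1]; show -(z 1) ≤ fp (z 0); linarith
    have himg : neg2 '' interior A = interior (neg2 '' A) := neg2Homeo.image_interior A
    have ecl : neg2 '' closure (interior A) = closure (neg2 '' interior A) :=
      neg2Homeo.image_closure (interior A)
    have hclρ : Aρ = closure (interior Aρ) := by
      rw [hAρ]
      nth_rewrite 1 [hcl]
      rw [ecl, himg]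
    have hconnρ : IsPreconnected (interior Aρ) := by
      rw [hAρ, ← himg]
      exact (hconn.isPreconnected).image _ (neg2_isometry.continuous.continuousOn)
    have hgoodρ : ∀ x ∈ Set.Icc a b, -(fp x) ≤ -(fm x) := by
      intro x hx
      have := hgood x hx
      linarith
    have hnaρ : (fun t => -(fm t)) a = (fun t => -(fp t)) a := by
      simp only []
      rw [hnorm.1]
    intro x hx y hy
    have hxρ : neg2 x ∈ Aρ := ⟨x, hx, rfl⟩
    have hyρ : neg2 y ∈ Aρ := ⟨y, hy, rfl⟩
    rcases le_total (x 0) (y 0) with h0 | h0 <;> rcases le_total (x 1) (y 1) with h1 | h1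
    · -- NE
      exact (core hc hd hpm hpa hma hmm hnorm.1 hgood hA hcl hconn.isPreconnected
        hx hy h0 h1).staircase
    · -- SE : use reflection
      have hNE := core hd hc hgm hga hma' hmm' hnaρ hgoodρ hmemρ hclρ hconnρ
        hxρ hyρ (by rw [neg2_app0, neg2_app0]; exact h0)
        (by rw [neg2_app1, neg2_app1]; linarith)
      obtain ⟨n, γ, hγ0, hγn, hst⟩ := hNE.staircase
      refine ⟨n, fun k => neg2 (γ k), by show neg2 (γ 0) = x; rw [hγ0, neg2_neg2],
        by show neg2 (γ n) = y; rw [hγn, neg2_neg2], ?_⟩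
      have := stair_neg2 hst
      rwa [hAρ, neg2_image_image] at this
    · -- NW : reflect and reverse
      have hNE := core hd hc hgm hga hma' hmm' hnaρ hgoodρ hmemρ hclρ hconnρ
        hyρ hxρ (by rw [neg2_app0, neg2_app0]; exact h0)
        (by rw [neg2_app1, neg2_app1]; linarith)
      obtain ⟨n, γ, hγ0, hγn, hst⟩ := hNE.staircase
      have hstA : IsStaircaseIn A (fun k => neg2 (γ k)) n := by
        have := stair_neg2 hst
        rwa [hAρ, neg2_image_image] at this
      refine ⟨n, fun k => neg2 (γ (n - k)), ?_, ?_, stair_reverse hstA⟩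
      · show neg2 (γ (n - 0)) = x
        rw [Nat.sub_zero, hγn, neg2_neg2]
      · show neg2 (γ (n - n)) = y
        rw [Nat.sub_self, hγ0, neg2_neg2]
    · -- SW : reverse
      have hNE := core hc hd hpm hpa hma hmm hnorm.1 hgood hA hcl hconn.isPreconnected
        hy hx h0 h1
      obtain ⟨n, γ, hγ0, hγn, hst⟩ := hNE.staircase
      refine ⟨n, fun k => γ (n - k), ?_, ?_, stair_reverse hst⟩
      · show γ (n - 0) = x
        rw [Nat.sub_zero, hγn]
      · show γ (n - n) = y
        rw [Nat.sub_self, hγ0]
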